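/- Let G be a finite group with a normal subgroup N such that k(G) = k(N)·k(G/N), N is abelian, and G/N is abelian. Then N ≤ Z(G), and in particular G is nilpotent of class at most 2. -/

import Mathlib

/-- If `N ⊴ G` with `k(G) = k(N)·k(G/N)`, `N` abelian and `G/N` abelian, then
`N ≤ Z(G)` and `G` is nilpotent of class at most `2`. -/
theorem stmt_16 (G : Type) [Group G] [Finite G] (N : Subgroup G) [N.Normal]
    (h : Nat.card (ConjClasses G) =
      Nat.card (ConjClasses N) * Nat.card (ConjClasses (G ⧸ N)))
    (hN : ∀ a b : N, a * b = b * a) (hQ : ∀ a b : G ⧸ N, a * b = b * a) :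
    N ≤ Subgroup.center G ∧ Group.IsNilpotent G ∧ (⊤ : Subgroup G).lowerCentralSeries 2 = ⊥ := by
  letI : CommGroup N := { (inferInstance : Group N) with mul_comm := hN }
  letI : CommGroup (G ⧸ N) := { (inferInstance : Group (G ⧸ N)) with mul_comm := hQ }
  -- k(N) = |N| and k(G/N) = |G/N|, so k(G) = |G|
  have h1 : Nat.card (ConjClasses N) = Nat.card N :=
    (Nat.card_congr ConjClasses.mkEquiv.symm)
  have h2 : Nat.card (ConjClasses (G ⧸ N)) = Nat.card (G ⧸ N) :=
    (Nat.card_congr ConjClasses.mkEquiv.symm)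
  have hG : Nat.card (ConjClasses G) = Nat.card G := by
    rw [h, h1, h2, Subgroup.card_eq_card_quotient_mul_card_subgroup N, mul_comm]
  -- mk : G → ConjClasses G is surjective; equal cards force injectivity
  have hsurj : Function.Surjective (ConjClasses.mk (α := G)) :=
    ConjClasses.mk_surjective
  have hinj : Function.Injective (ConjClasses.mk (α := G)) :=
    ((Nat.bijective_iff_surjective_and_card _).mpr ⟨hsurj, hG.symm⟩).injective
  -- hence G is abelian
  have hcomm : ∀ a b : G, a * b = b * a := by
    intro a b
    have : ConjClasses.mk (b * a * b⁻¹) = ConjClasses.mk a := by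
      rw [ConjClasses.mk_eq_mk_iff_isConj]
      exact (isConj_iff).mpr ⟨b⁻¹, by group⟩
    have := hinj this
    exact (mul_inv_eq_iff_eq_mul.mp this).symm
  have hcenter : N ≤ Subgroup.center G := fun n _ => by
    rw [Subgroup.mem_center_iff]; intro g; exact hcomm g n
  refine ⟨hcenter, ?_, ?_⟩
  · letI : CommGroup G := { (inferInstance : Group G) with mul_comm := hcomm }
    infer_instance
  · have h1 : (⊤ : Subgroup G).lowerCentralSeries 1 = ⊥ := by
      apply lowerCentralSeries_succ_eq_bot
      simp only [lowerCentralSeries_zero]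
      intro x _
      rw [Subgroup.mem_center_iff]; intro g; exact hcomm g x
    rw [lowerCentralSeries_succ, h1]
    simp [Subgroup.commutator_bot_left]
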